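/- If (a_1, …, a_m) and (b_1, …, b_n) are complementary sequences of integers all ≥ 2, then a_m = 2 or b_n = 2. -/

import Mathlib

/-- Negative continued fraction `[a₁, …, aₙ]⁻`. -/
def ncf : List ℚ → ℚ
  | [] => 0
  | [a] => a
  | a :: b :: l => a - 1 / ncf (b :: l)

/-- Negative continued fraction of a list of integers. -/
def ncfZ (l : List ℤ) : ℚ := ncf (l.map (fun x => (x : ℚ)))

/-- Two sequences of integers, all ≥ 2, are complementary if the reciprocals of their
negative continued fractions sum to 1. -/
def Complementary (a b : List ℤ) : Prop :=
  a ≠ [] ∧ b ≠ [] ∧ (∀ x ∈ a, 2 ≤ x) ∧ (∀ x ∈ b, 2 ≤ x) ∧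
    1 / ncfZ a + 1 / ncfZ b = 1

/-- The standard negative definite bilinear form on `ℤ^N`. -/
def negForm {N : ℕ} (x y : Fin N → ℤ) : ℤ := -∑ i, x i * y i

lemma ncfZ_singleton (c : ℤ) : ncfZ [c] = c := rfl

lemma ncfZ_cons (c d : ℤ) (l : List ℤ) : ncfZ (c :: d :: l) = c - 1 / ncfZ (d :: l) := rfl

lemma ncfZ_gt_one : ∀ l : List ℤ, l ≠ [] → (∀ x ∈ l, 2 ≤ x) → 1 < ncfZ l := by
  intro l
  induction l with
  | nil => simp
  | cons c t ih =>
    intro _ h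
    have hc : (2:ℚ) ≤ (c:ℚ) := by exact_mod_cast h c (by simp)
    cases t with
    | nil => rw [ncfZ_singleton]; linarith
    | cons d t' =>
      have ht : 1 < ncfZ (d :: t') := ih (by simp) (fun x hx => h x (by simp [hx]))
      rw [ncfZ_cons]
      have h1 : 1 / ncfZ (d :: t') < 1 := by
        rw [div_lt_one (by linarith)]; linarith
      linarith

lemma ncfZ_lt_head (c d : ℤ) (l : List ℤ) (h : ∀ x ∈ c :: d :: l, 2 ≤ x) :
    ncfZ (c :: d :: l) < c := by
  have ht : 1 < ncfZ (d :: l) := ncfZ_gt_one _ (by simp) (fun x hx => h x (by simp [hx]))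
  rw [ncfZ_cons]
  have : 0 < 1 / ncfZ (d :: l) := by positivity
  linarith

/-- If `ncfZ b = k/(k-1)` with `k ≥ 2`, then the last entry of `b` is `2`. -/
lemma lastTwo_of_ratio : ∀ b : List ℤ, b ≠ [] → (∀ x ∈ b, 2 ≤ x) →
    ∀ k : ℤ, 2 ≤ k → ncfZ b = (k : ℚ) / (k - 1) → b.getLast? = some 2 := by
  intro b
  induction b with
  | nil => simp
  | cons c t ih =>
    intro _ h k hk heq
    have hk1 : (1:ℚ) ≤ (k:ℚ) - 1 := by
      have : (2:ℚ) ≤ (k:ℚ) := by exact_mod_cast hk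
      linarith
    have hkq : (2:ℚ) ≤ (k:ℚ) := by exact_mod_cast hk
    have hratio_le : (k:ℚ) / (k-1) ≤ 2 := by
      rw [div_le_iff₀ (by linarith)]; linarith
    have hratio_gt : 1 < (k:ℚ) / (k-1) := by
      rw [lt_div_iff₀ (by linarith)]; linarith
    have hc : 2 ≤ c := h c (by simp)
    cases t with
    | nil =>
      rw [ncfZ_singleton] at heq
      have hcq : (c:ℚ) ≤ 2 := heq ▸ hratio_le
      have : c ≤ 2 := by exact_mod_cast hcq
      have : c = 2 := le_antisymm this hc
      simp [this]
    | cons d t' =>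
      have ht : 1 < ncfZ (d :: t') := ncfZ_gt_one _ (by simp) (fun x hx => h x (by simp [hx]))
      rw [ncfZ_cons] at heq
      have hinv_pos : 0 < 1 / ncfZ (d :: t') := by positivity
      have hinv_lt : 1 / ncfZ (d :: t') < 1 := by rw [div_lt_one (by linarith)]; linarith
      have hcq3 : (c:ℚ) < 3 := by linarith
      have hc2 : c = 2 := by
        have : c < 3 := by exact_mod_cast hcq3
        omega
      subst hc2
      have hinv : 1 / ncfZ (d :: t') = ((k:ℚ) - 2) / (k - 1) := by
        have hne : (k:ℚ) - 1 ≠ 0 := by linarith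
        have h2 : 1 / ncfZ (d :: t') = 2 - (k:ℚ)/(k-1) := by push_cast at heq; linarith
        rw [h2]; field_simp; ring
      have hk3 : 3 ≤ k := by
        by_contra hcon
        have : k = 2 := by omega
        subst this
        norm_num at hinv
        linarith
      have hv : ncfZ (d :: t') = ((k:ℚ) - 1) / (k - 2) := by
        have hk2 : (0:ℚ) < (k:ℚ) - 2 := by
          have : (3:ℚ) ≤ (k:ℚ) := by exact_mod_cast hk3
          linarith
        have hne : ncfZ (d :: t') ≠ 0 := by linarith
        field_simp at hinv ⊢
        linarith [hinv]
      have := ih (by simp) (fun x hx => h x (by simp [hx])) (k - 1) (by omega)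
        (by rw [hv]; push_cast; ring_nf)
      rw [List.getLast?_cons_cons]
      exact this

lemma step_aux (N : ℕ)
    (ih : ∀ a b : List ℤ, a.length + b.length ≤ N → Complementary a b →
      a.getLast? = some 2 ∨ b.getLast? = some 2)
    (c e : ℤ) (t : List ℤ) (d f : ℤ) (s : List ℤ)
    (hlen : (c :: e :: t).length + (d :: f :: s).length ≤ N + 1)
    (hc3 : 3 ≤ c)
    (hcomp : Complementary (c :: e :: t) (d :: f :: s)) :
    (c :: e :: t).getLast? = some 2 ∨ (d :: f :: s).getLast? = some 2 := by
  obtain ⟨-, -, h2a, h2b, heq⟩ := hcomp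
  set x := ncfZ (c :: e :: t) with hxdef
  set y := ncfZ (d :: f :: s) with hydef
  have hxt : 1 < ncfZ (e :: t) := ncfZ_gt_one _ (by simp) (fun z hz => h2a z (by simp [hz]))
  have hys : 1 < ncfZ (f :: s) := ncfZ_gt_one _ (by simp) (fun z hz => h2b z (by simp [hz]))
  have hxe : x = c - 1 / ncfZ (e :: t) := ncfZ_cons c e t
  have hye : y = d - 1 / ncfZ (f :: s) := ncfZ_cons d f s
  have hxt_lt : 1 / ncfZ (e :: t) < 1 := by rw [div_lt_one (by linarith)]; linarith
  have hxt_pos : 0 < 1 / ncfZ (e :: t) := by positivity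
  have hys_lt : 1 / ncfZ (f :: s) < 1 := by rw [div_lt_one (by linarith)]; linarith
  have hys_pos : 0 < 1 / ncfZ (f :: s) := by positivity
  have hcq : (3:ℚ) ≤ (c:ℚ) := by exact_mod_cast hc3
  have hdq : (2:ℚ) ≤ (d:ℚ) := by exact_mod_cast h2b d (by simp)
  have hx2 : 2 < x := by rw [hxe]; linarith
  have hy1 : 1 < y := by rw [hye]; linarith
  have hyd : (d:ℚ) - 1 < y := by rw [hye]; linarith
  have heq' : x * y = x + y := by
    have hx0 : x ≠ 0 := by linarith
    have hy0 : y ≠ 0 := by linarith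
    field_simp at heq
    linarith
  have hy2 : y < 2 := by nlinarith
  have hd2 : d = 2 := by
    have : (d:ℚ) < 3 := by linarith
    have : d < 3 := by exact_mod_cast this
    have := h2b d (by simp)
    omega
  subst hd2
  set ys := ncfZ (f :: s) with hysdef
  have hys0 : ys ≠ 0 := by linarith
  have hyB : y * ys = 2 * ys - 1 := by
    rw [hye]; push_cast; field_simp
  have hx1 : x - 1 ≠ 0 := by linarith
  have hcomp' : Complementary ((c - 1) :: e :: t) (f :: s) := by
    refine ⟨by simp, by simp, ?_, fun z hz => h2b z (by simp [hz]), ?_⟩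
    · intro z hz
      simp at hz
      rcases hz with hz | hz | hz
      · omega
      · subst hz; exact h2a z (by simp)
      · exact h2a z (by simp [hz])
    · have hval : ncfZ ((c - 1) :: e :: t) = x - 1 := by
        rw [ncfZ_cons, hxe]; push_cast; ring
      rw [hval]
      field_simp
      have hys0' : ncfZ (f :: s) ≠ 0 := hys0
      rw [add_div' _ _ _ hys0', div_eq_iff hys0']
      linear_combination (-ys) * heq' + (x - 1) * hyB
  have hlast := ih _ _ (by simp at hlen ⊢; omega) hcomp'
  rcases hlast with h1 | h1
  · left
    rw [List.getLast?_cons_cons] at h1 ⊢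
    exact h1
  · right
    rw [List.getLast?_cons_cons]
    exact h1

lemma main_aux : ∀ N : ℕ, ∀ a b : List ℤ, a.length + b.length ≤ N →
    Complementary a b → a.getLast? = some 2 ∨ b.getLast? = some 2 := by
  intro N
  induction N with
  | zero =>
    intro a b hlen hcomp
    obtain ⟨ha, -, -⟩ := hcomp
    cases a <;> simp at ha hlen
  | succ N ih =>
    intro a b hlen hcomp
    obtain ⟨ha, hb, h2a, h2b, heq⟩ := hcomp
    cases a with
    | nil => exact absurd rfl ha
    | cons c t =>
      cases t with
      | nil =>
        -- a = [c] : then ncfZ b = c/(c-1)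
        right
        have hc : 2 ≤ c := h2a c (by simp)
        have hcq : (2:ℚ) ≤ (c:ℚ) := by exact_mod_cast hc
        have hy1 : 1 < ncfZ b := ncfZ_gt_one b hb h2b
        have hy0 : ncfZ b ≠ 0 := by linarith
        have hc0 : (c:ℚ) ≠ 0 := by linarith
        rw [ncfZ_singleton] at heq
        refine lastTwo_of_ratio b hb h2b c hc ?_
        have hc1 : (c:ℚ) - 1 ≠ 0 := by linarith
        field_simp at heq ⊢
        linarith
      | cons e t' =>
        cases b with
        | nil => exact absurd rfl hb
        | cons d s =>
          cases s with
          | nil =>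
            -- b = [d] : then ncfZ a = d/(d-1)
            left
            have hd : 2 ≤ d := h2b d (by simp)
            have hdq : (2:ℚ) ≤ (d:ℚ) := by exact_mod_cast hd
            have hx1 : 1 < ncfZ (c :: e :: t') := ncfZ_gt_one _ (by simp) h2a
            have hx0 : ncfZ (c :: e :: t') ≠ 0 := by linarith
            have hd0 : (d:ℚ) ≠ 0 := by linarith
            rw [ncfZ_singleton] at heq
            refine lastTwo_of_ratio _ (by simp) h2a d hd ?_
            have hd1 : (d:ℚ) - 1 ≠ 0 := by linarith
            field_simp at heq ⊢
            linarith
          | cons f s' =>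
            by_cases hc3 : 3 ≤ c
            · exact step_aux N ih c e t' d f s' hlen hc3 ⟨ha, hb, h2a, h2b, heq⟩
            · -- c = 2, show 3 ≤ d
              have hc : 2 ≤ c := h2a c (by simp)
              have hc2 : c = 2 := by omega
              have hx1 : 1 < ncfZ (c :: e :: t') := ncfZ_gt_one _ (by simp) h2a
              have hxlt : ncfZ (c :: e :: t') < c := ncfZ_lt_head c e t' h2a
              have hy1 : 1 < ncfZ (d :: f :: s') := ncfZ_gt_one _ (by simp) h2b
              have hylt : ncfZ (d :: f :: s') < d := ncfZ_lt_head d f s' h2b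
              have hx2 : ncfZ (c :: e :: t') < 2 := by
                have hcc : (c:ℚ) = 2 := by exact_mod_cast hc2
                linarith
              have hhalf : (1:ℚ)/2 < 1 / ncfZ (c :: e :: t') := by
                rw [div_lt_div_iff₀ (by norm_num) (by linarith)]; linarith
              have hyhalf : 1 / ncfZ (d :: f :: s') < 1/2 := by linarith
              have hy2 : 2 < ncfZ (d :: f :: s') := by
                rw [div_lt_div_iff₀ (by linarith) (by norm_num)] at hyhalf
                linarith
              have hd3 : 3 ≤ d := by
                have : (2:ℚ) < (d:ℚ) := by linarith
                have : 2 < d := by exact_mod_cast this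
                omega
              have := step_aux N ih d f s' c e t' (by simp at hlen ⊢; omega) hd3
                ⟨hb, ha, h2b, h2a, by linarith⟩
              exact this.symm

theorem complementary_last_two (a b : List ℤ) (ha : a ≠ []) (hb : b ≠ [])
    (h : Complementary a b) :
    a.getLast ha = 2 ∨ b.getLast hb = 2 := by
  have h2 := main_aux (a.length + b.length) a b le_rfl h
  rcases h2 with h2 | h2
  · left
    rw [List.getLast?_eq_getLast ha] at h2
    exact Option.some.inj h2
  · right
    rw [List.getLast?_eq_getLast hb] at h2
    exact Option.some.inj h2
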